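/- A real-valued function f on [a,b] is absolutely continuous if and only if it satisfies all three of: (i) f is continuous on [a,b]; (ii) f is of bounded variation on [a,b]; (iii) f maps sets of Lebesgue measure zero to sets of Lebesgue measure zero. -/

import Mathlib

open MeasureTheory Set

/-- `f` is absolutely continuous on `[a,b]`: for every `ε > 0` there is `δ > 0` such that
for every finite disjoint collection of open intervals `(xᵢ, yᵢ) ⊆ [a,b]` of total length
less than `δ`, we have `Σ |f yᵢ - f xᵢ| < ε`. -/
def AbsolutelyContinuousOn (f : ℝ → ℝ) (a b : ℝ) : Prop :=
  ∀ ε > (0:ℝ), ∃ δ > (0:ℝ), ∀ n : ℕ, ∀ x y : Fin n → ℝ,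
    (∀ i, a ≤ x i ∧ x i ≤ y i ∧ y i ≤ b) →
    (∀ i j, i ≠ j → Disjoint (Ioo (x i) (y i)) (Ioo (x j) (y j))) →
    ∑ i, (y i - x i) < δ → ∑ i, |f (y i) - f (x i)| < ε

open Filter Topology
open scoped ENNReal

lemma aux_mono_disjoint {u : ℕ → ℝ} (hu : Monotone u) {i j : ℕ} (hij : i < j) :
    Disjoint (Ioo (u i) (u (i+1))) (Ioo (u j) (u (j+1))) := by
  rw [Set.disjoint_left]
  rintro z ⟨_, h2⟩ ⟨h3, _⟩
  exact absurd (h2.trans_le (hu hij)) (not_lt.2 h3.le)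

lemma aux_AC_cont {f : ℝ → ℝ} {a b : ℝ}
    (hAC : ∀ ε > (0:ℝ), ∃ δ > (0:ℝ), ∀ n : ℕ, ∀ x y : Fin n → ℝ,
      (∀ i, a ≤ x i ∧ x i ≤ y i ∧ y i ≤ b) →
      (∀ i j, i ≠ j → Disjoint (Ioo (x i) (y i)) (Ioo (x j) (y j))) →
      ∑ i, (y i - x i) < δ → ∑ i, |f (y i) - f (x i)| < ε) :
    ContinuousOn f (Icc a b) := by
  rw [Metric.continuousOn_iff]
  intro x hx ε hε
  obtain ⟨δ, hδ, H⟩ := hAC ε hε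
  refine ⟨δ, hδ, fun y hy hxy => ?_⟩
  have := H 1 (fun _ => min x y) (fun _ => max x y) ?_ ?_ ?_
  · rw [Finset.sum_const, Finset.card_univ] at this
    simp only [Fintype.card_fin, one_smul] at this
    rw [Real.dist_eq]
    rcases le_total x y with h | h
    · rwa [min_eq_left h, max_eq_right h] at this
    · rwa [min_eq_right h, max_eq_left h, abs_sub_comm] at this
  · intro i
    exact ⟨le_min hx.1 hy.1, min_le_max, max_le hx.2 hy.2⟩
  · intro i j hij
    exact absurd (Subsingleton.elim i j) hij
  · rw [Finset.sum_const, Finset.card_univ]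
    simp only [Fintype.card_fin, one_smul]
    rw [Real.dist_eq] at hxy
    rwa [max_sub_min_eq_abs]

lemma aux_chunk {f : ℝ → ℝ} {a b δ : ℝ} (hδ : 0 < δ)
    (H : ∀ n : ℕ, ∀ x y : Fin n → ℝ,
      (∀ i, a ≤ x i ∧ x i ≤ y i ∧ y i ≤ b) →
      (∀ i j, i ≠ j → Disjoint (Ioo (x i) (y i)) (Ioo (x j) (y j))) →
      ∑ i, (y i - x i) < δ → ∑ i, |f (y i) - f (x i)| < 1)
    {c d : ℝ} (hcd : d - c < δ) :
    eVariationOn f (Icc a b ∩ Icc c d) ≤ 1 := by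
  apply iSup_le
  rintro ⟨n, u, hu, us⟩
  have key : ∑ i ∈ Finset.range n, |f (u (i+1)) - f (u i)| < 1 := by
    rcases Nat.eq_zero_or_pos n with rfl | hn
    · simp
    rw [← Fin.sum_univ_eq_sum_range (fun i => |f (u (i+1)) - f (u i)|) n]
    refine H n (fun i => u i) (fun i => u (i+1)) (fun i => ⟨(us i).1.1, hu (Nat.le_succ _), (us (i+1)).1.2⟩)
      (fun i j hij => ?_) ?_
    · rcases Ne.lt_or_gt hij with h | h
      · exact aux_mono_disjoint hu (by exact_mod_cast h)
      · exact (aux_mono_disjoint hu (by exact_mod_cast h)).symm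
    · rw [Fin.sum_univ_eq_sum_range (fun i => u (i+1) - u i) n, Finset.sum_range_sub u]
      have h1 : u n ≤ d := (us n).2.2
      have h2 : c ≤ u 0 := (us 0).2.1
      linarith
  calc ∑ i ∈ Finset.range n, edist (f (u (i+1))) (f (u i))
      = ENNReal.ofReal (∑ i ∈ Finset.range n, |f (u (i+1)) - f (u i)|) := by
        rw [ENNReal.ofReal_sum_of_nonneg (fun i _ => abs_nonneg _)]
        refine Finset.sum_congr rfl fun i _ => ?_
        rw [edist_dist, Real.dist_eq]
    _ ≤ ENNReal.ofReal 1 := ENNReal.ofReal_le_ofReal key.le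
    _ = 1 := ENNReal.ofReal_one

lemma aux_AC_BV {f : ℝ → ℝ} {a b : ℝ} (hab : a ≤ b)
    (hAC : ∀ ε > (0:ℝ), ∃ δ > (0:ℝ), ∀ n : ℕ, ∀ x y : Fin n → ℝ,
      (∀ i, a ≤ x i ∧ x i ≤ y i ∧ y i ≤ b) →
      (∀ i j, i ≠ j → Disjoint (Ioo (x i) (y i)) (Ioo (x j) (y j))) →
      ∑ i, (y i - x i) < δ → ∑ i, |f (y i) - f (x i)| < ε) :
    BoundedVariationOn f (Icc a b) := by
  obtain ⟨δ, hδ, H⟩ := hAC 1 one_pos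
  set η := δ/2 with hη
  have hη0 : 0 < η := by positivity
  set t : ℕ → ℝ := fun k => min b (a + k*η) with ht
  have htmem : ∀ k, t k ∈ Icc a b := fun k =>
    ⟨le_min hab (by nlinarith [Nat.cast_nonneg (α := ℝ) k, hη0.le]), min_le_left _ _⟩
  have claim : ∀ k : ℕ, eVariationOn f (Icc a b ∩ Icc a (t k)) ≤ k := by
    intro k
    induction k with
    | zero =>
      have : t 0 = a := by simp [ht, hab]
      rw [this]
      have hsub : (Icc a b ∩ Icc a a).Subsingleton := by
        intro x hx y hy
        simp only [Icc_self, mem_inter_iff, mem_singleton_iff] at hx hy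
        rw [hx.2, hy.2]
      rw [Icc_self] at hsub
      simp [eVariationOn.subsingleton f hsub]
    | succ k IH =>
      have h1 : t k ≤ t (k+1) := by
        apply min_le_min le_rfl
        have : (k:ℝ) ≤ (k:ℝ)+1 := by linarith
        push_cast
        nlinarith
      have h0 : a ≤ t k := (htmem k).1
      rw [← eVariationOn.Icc_add_Icc f h0 h1 (htmem k)]
      push_cast [Nat.cast_succ]
      refine add_le_add IH (aux_chunk hδ H ?_)
      rcases le_total b (a + k*η) with h | h
      · have e1 : t k = b := min_eq_left h
        have e2 : t (k+1) = b := min_eq_left (by push_cast; nlinarith)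
        rw [e1, e2]; simpa using hδ
      · have e1 : t k = a + k*η := min_eq_right h
        have e2 : t (k+1) ≤ a + ((k:ℝ)+1)*η := by
          refine le_trans (min_le_right _ _) ?_
          push_cast
          exact le_rfl
        nlinarith
  obtain ⟨K, hK⟩ := exists_nat_ge ((b-a)/η)
  have htK : t K = b := by
    apply min_eq_left
    rw [div_le_iff₀ hη0] at hK
    linarith
  have : eVariationOn f (Icc a b) ≤ K := by
    have := claim K
    rwa [htK, inter_self] at this
  exact ne_top_of_le_ne_top (ENNReal.natCast_ne_top K) this


lemma aux_comp {f : ℝ → ℝ} {a b : ℝ} (hf : ContinuousOn f (Icc a b))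
    {s : Set ℝ} (hsc : IsPreconnected s) (hne : s.Nonempty) (hsub : s ⊆ Ioo a b) :
    ∃ p q : ℝ, p ≤ q ∧ a ≤ p ∧ q ≤ b ∧ Ioo p q ⊆ s ∧
      volume (f '' s) ≤ ENNReal.ofReal |f q - f p| ∧ ENNReal.ofReal (q - p) ≤ volume s := by
  have hbb : BddBelow s := ⟨a, fun x hx => (hsub hx).1.le⟩
  have hba : BddAbove s := ⟨b, fun x hx => (hsub hx).2.le⟩
  set c := sInf s with hc
  set d := sSup s with hd
  have hcd : c ≤ d := Real.sInf_le_sSup s hbb hba |>.trans_eq rfl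
  have hIoo : Ioo c d ⊆ s := by
    intro z hz
    obtain ⟨u, hu, huz⟩ := (csInf_lt_iff hbb hne).1 hz.1
    obtain ⟨v, hv, hzv⟩ := (lt_csSup_iff hba hne).1 hz.2
    exact hsc.ordConnected.out hu hv ⟨huz.le, hzv.le⟩
  have hsIcc : s ⊆ Icc c d := fun x hx => ⟨csInf_le hbb hx, le_csSup hba hx⟩
  have hc_mem : c ∈ Icc a b := by
    obtain ⟨x, hx⟩ := id hne
    exact ⟨le_csInf hne (fun y hy => (hsub hy).1.le), (csInf_le hbb hx).trans (hsub hx).2.le⟩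
  have hd_mem : d ∈ Icc a b := by
    obtain ⟨x, hx⟩ := id hne
    exact ⟨(hsub hx).1.le.trans (le_csSup hba hx), csSup_le hne (fun y hy => (hsub hy).2.le)⟩
  have hIccab : Icc c d ⊆ Icc a b := Icc_subset_Icc hc_mem.1 hd_mem.2
  have hfc : ContinuousOn f (Icc c d) := hf.mono hIccab
  obtain ⟨p0, hp0, hmin⟩ := isCompact_Icc.exists_isMinOn (nonempty_Icc.2 hcd) hfc
  obtain ⟨q0, hq0, hmax⟩ := isCompact_Icc.exists_isMaxOn (nonempty_Icc.2 hcd) hfc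
  refine ⟨min p0 q0, max p0 q0, min_le_max, ?_, ?_, ?_, ?_, ?_⟩
  · exact (hIccab ⟨le_min hp0.1 hq0.1, min_le_of_left_le hp0.2⟩).1
  · exact (hIccab ⟨le_max_of_le_left hp0.1, max_le hp0.2 hq0.2⟩).2
  · refine fun z hz => hIoo ⟨?_, ?_⟩
    · exact lt_of_le_of_lt (le_min hp0.1 hq0.1) hz.1
    · exact lt_of_lt_of_le hz.2 (max_le hp0.2 hq0.2)
  · have him : f '' s ⊆ Icc (f p0) (f q0) := by
      rintro _ ⟨z, hz, rfl⟩
      exact ⟨hmin (hsIcc hz), hmax (hsIcc hz)⟩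
    calc volume (f '' s) ≤ volume (Icc (f p0) (f q0)) := measure_mono him
      _ = ENNReal.ofReal (f q0 - f p0) := Real.volume_Icc
      _ ≤ ENNReal.ofReal |f (max p0 q0) - f (min p0 q0)| := by
          apply ENNReal.ofReal_le_ofReal
          rcases le_total p0 q0 with h | h
          · rw [min_eq_left h, max_eq_right h]; exact le_abs_self _
          · rw [min_eq_right h, max_eq_left h, abs_sub_comm]; exact le_abs_self _
  · calc ENNReal.ofReal (max p0 q0 - min p0 q0)
        ≤ ENNReal.ofReal (d - c) := by
          apply ENNReal.ofReal_le_ofReal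
          have h1 : c ≤ min p0 q0 := le_min hp0.1 hq0.1
          have h2 : max p0 q0 ≤ d := max_le hp0.2 hq0.2
          linarith
      _ = volume (Ioo c d) := Real.volume_Ioo.symm
      _ ≤ volume s := measure_mono hIoo

lemma aux_AC_N_key {f : ℝ → ℝ} {a b : ℝ} (hf : ContinuousOn f (Icc a b))
    {E' : Set ℝ} (hE' : E' ⊆ Ioo a b) (hE0 : volume E' = 0)
    {ε δ : ℝ} (hε : 0 < ε) (hδ : 0 < δ)
    (H : ∀ n : ℕ, ∀ x y : Fin n → ℝ,
      (∀ i, a ≤ x i ∧ x i ≤ y i ∧ y i ≤ b) →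
      (∀ i j, i ≠ j → Disjoint (Ioo (x i) (y i)) (Ioo (x j) (y j))) →
      ∑ i, (y i - x i) < δ → ∑ i, |f (y i) - f (x i)| < ε) :
    volume (f '' E') ≤ ENNReal.ofReal ε := by
  classical
  obtain ⟨U, hEU, hUo, hUvol⟩ := Set.exists_isOpen_lt_of_lt E' (ENNReal.ofReal δ)
    (by rw [hE0]; exact ENNReal.ofReal_pos.2 hδ)
  set U' := U ∩ Ioo a b with hU'def
  have hU'o : IsOpen U' := hUo.inter isOpen_Ioo
  have hU'sub : U' ⊆ Ioo a b := inter_subset_right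
  have hU'vol : volume U' < ENNReal.ofReal δ :=
    lt_of_le_of_lt (measure_mono inter_subset_left) hUvol
  have hEU' : E' ⊆ U' := fun x hx => ⟨hEU hx, hE' hx⟩
  set C : ℚ → Set ℝ := fun q => connectedComponentIn U' (q : ℝ) with hCdef
  have hcov : U' ⊆ ⋃ q : ℚ, C q := by
    intro x hx
    have hxC : x ∈ connectedComponentIn U' x := mem_connectedComponentIn hx
    obtain ⟨q, hq⟩ := Rat.denseRange_cast.exists_mem_open hU'o.connectedComponentIn ⟨x, hxC⟩
    refine mem_iUnion.2 ⟨q, ?_⟩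
    have hCeq : connectedComponentIn U' x = connectedComponentIn U' (q:ℝ) :=
      connectedComponentIn_eq hq
    show x ∈ connectedComponentIn U' (q:ℝ)
    rw [← hCeq]
    exact hxC
  set e : ℕ → ℚ := fun n => (Denumerable.eqv ℚ).symm n with hedef
  have he : Function.Surjective e := (Denumerable.eqv ℚ).symm.surjective
  set K : ℕ → Set ℝ := fun m => ⋃ (i : ℕ) (_ : i < m), f '' C (e i) with hKdef
  have hKmono : Monotone K := by
    intro m m' hmm'
    exact Set.iUnion_mono fun i => Set.iUnion_mono' fun h => ⟨lt_of_lt_of_le h hmm', subset_rfl⟩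
  have himsub : f '' E' ⊆ ⋃ m, K m := by
    rintro _ ⟨x, hx, rfl⟩
    obtain ⟨q, hq⟩ := mem_iUnion.1 (hcov (hEU' hx))
    obtain ⟨i, rfl⟩ := he q
    exact mem_iUnion.2 ⟨i + 1, mem_iUnion.2 ⟨i, mem_iUnion.2 ⟨Nat.lt_succ_self i, ⟨x, hq, rfl⟩⟩⟩⟩
  -- per-stage bound
  have hstage : ∀ m : ℕ, volume (K m) ≤ ENNReal.ofReal ε := by
    intro m
    set S : Finset (Set ℝ) :=
      ((Finset.range m).image fun i => C (e i)).filter (fun s => s.Nonempty) with hSdef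
    have hSmem : ∀ s ∈ S, s.Nonempty ∧ ∃ r : ℝ, s = connectedComponentIn U' r := by
      intro s hs
      rw [hSdef, Finset.mem_filter, Finset.mem_image] at hs
      obtain ⟨⟨i, _, rfl⟩, hne⟩ := hs
      exact ⟨hne, ⟨(e i : ℝ), rfl⟩⟩
    have hKS : K m ⊆ ⋃ s ∈ S, f '' s := by
      intro z hz
      rw [hKdef] at hz
      obtain ⟨i, hi⟩ := mem_iUnion.1 hz
      obtain ⟨him, hzi⟩ := mem_iUnion.1 hi
      obtain ⟨x, hx, rfl⟩ := hzi
      refine mem_iUnion₂.2 ⟨C (e i), ?_, ⟨x, hx, rfl⟩⟩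
      rw [hSdef, Finset.mem_filter]
      exact ⟨Finset.mem_image.2 ⟨i, Finset.mem_range.2 him, rfl⟩, ⟨x, hx⟩⟩
    -- data for each component in S
    have hP : ∀ s ∈ S, ∃ p q : ℝ, p ≤ q ∧ a ≤ p ∧ q ≤ b ∧ Ioo p q ⊆ s ∧
        volume (f '' s) ≤ ENNReal.ofReal |f q - f p| ∧ ENNReal.ofReal (q - p) ≤ volume s := by
      intro s hs
      obtain ⟨hne, r, rfl⟩ := hSmem s hs
      exact aux_comp hf isPreconnected_connectedComponentIn hne
        ((connectedComponentIn_subset _ _).trans hU'sub)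
    set n := S.card with hn
    set es : Fin n → {x // x ∈ S} := fun i => S.equivFin.symm i with hesdef
    choose p q hle ha hb hIoo him hlen using fun i : Fin n => hP (es i).1 (es i).2
    -- distinct indices give disjoint components
    have hdisj : ∀ i j : Fin n, i ≠ j → Disjoint ((es i : Set ℝ)) ((es j : Set ℝ)) := by
      intro i j hij
      rw [Set.disjoint_left]
      intro z hzi hzj
      obtain ⟨-, ri, hri⟩ := hSmem _ (es i).2
      obtain ⟨-, rj, hrj⟩ := hSmem _ (es j).2
      have hzi' : z ∈ connectedComponentIn U' ri := by rw [← hri]; exact hzi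
      have hzj' : z ∈ connectedComponentIn U' rj := by rw [← hrj]; exact hzj
      have : (es i : Set ℝ) = (es j : Set ℝ) := by
        rw [hri, hrj, connectedComponentIn_eq hzi', connectedComponentIn_eq hzj']
      exact hij (S.equivFin.symm.injective (Subtype.ext this))
    have hmeas : ∀ i : Fin n, MeasurableSet ((es i : Set ℝ)) := by
      intro i
      obtain ⟨-, r, hr⟩ := hSmem _ (es i).2
      rw [hr]
      exact hU'o.connectedComponentIn.measurableSet
    have hsub' : ∀ i : Fin n, ((es i : Set ℝ)) ⊆ U' := by
      intro i
      obtain ⟨-, r, hr⟩ := hSmem _ (es i).2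
      rw [hr]
      exact connectedComponentIn_subset _ _
    -- total length bound
    have hsumlen : ∑ i, (q i - p i) < δ := by
      rw [← ENNReal.ofReal_lt_ofReal_iff hδ]
      calc ENNReal.ofReal (∑ i, (q i - p i))
          = ∑ i, ENNReal.ofReal (q i - p i) :=
            ENNReal.ofReal_sum_of_nonneg (fun i _ => sub_nonneg.2 (hle i))
        _ ≤ ∑ i, volume ((es i : Set ℝ)) := Finset.sum_le_sum fun i _ => hlen i
        _ = volume (⋃ i, (es i : Set ℝ)) := by
            rw [measure_iUnion (fun i j hij => hdisj i j hij) hmeas, tsum_fintype]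
        _ ≤ volume U' := measure_mono (Set.iUnion_subset hsub')
        _ < ENNReal.ofReal δ := hU'vol
    have hACsum : ∑ i, |f (q i) - f (p i)| < ε := by
      refine H n p q (fun i => ⟨ha i, hle i, hb i⟩) (fun i j hij => ?_) hsumlen
      exact Set.disjoint_of_subset (hIoo i) (hIoo j) (hdisj i j hij)
    calc volume (K m) ≤ volume (⋃ s ∈ S, f '' s) := measure_mono hKS
      _ ≤ ∑ s ∈ S, volume (f '' s) := measure_biUnion_finset_le S _
      _ = ∑ i : Fin n, volume (f '' (es i : Set ℝ)) := by
          rw [← Finset.sum_attach S (fun s => volume (f '' s))]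
          exact (Equiv.sum_comp S.equivFin.symm (fun x => volume (f '' (x : Set ℝ)))).symm
      _ ≤ ∑ i : Fin n, ENNReal.ofReal |f (q i) - f (p i)| := Finset.sum_le_sum fun i _ => him i
      _ = ENNReal.ofReal (∑ i, |f (q i) - f (p i)|) :=
          (ENNReal.ofReal_sum_of_nonneg (fun i _ => abs_nonneg _)).symm
      _ ≤ ENNReal.ofReal ε := ENNReal.ofReal_le_ofReal hACsum.le
  calc volume (f '' E') ≤ volume (⋃ m, K m) := measure_mono himsub
    _ ≤ ENNReal.ofReal ε := by
        refine le_of_tendsto' (tendsto_measure_iUnion_atTop hKmono) hstage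

lemma aux_AC_N {f : ℝ → ℝ} {a b : ℝ} (hf : ContinuousOn f (Icc a b))
    (hAC : ∀ ε > (0:ℝ), ∃ δ > (0:ℝ), ∀ n : ℕ, ∀ x y : Fin n → ℝ,
      (∀ i, a ≤ x i ∧ x i ≤ y i ∧ y i ≤ b) →
      (∀ i j, i ≠ j → Disjoint (Ioo (x i) (y i)) (Ioo (x j) (y j))) →
      ∑ i, (y i - x i) < δ → ∑ i, |f (y i) - f (x i)| < ε) :
    ∀ E ⊆ Icc a b, volume E = 0 → volume (f '' E) = 0 := by
  intro E hE hE0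
  set E' := E ∩ Ioo a b with hE'def
  have hsplit : f '' E ⊆ f '' E' ∪ {f a, f b} := by
    rintro _ ⟨x, hx, rfl⟩
    rcases eq_or_lt_of_le (hE hx).1 with h | h
    · exact Or.inr (by simp [← h])
    rcases eq_or_lt_of_le (hE hx).2 with h' | h'
    · exact Or.inr (by simp [h'])
    · exact Or.inl ⟨x, ⟨hx, h, h'⟩, rfl⟩
  have hpair : volume ({f a, f b} : Set ℝ) = 0 :=
    (Set.toFinite _).measure_zero volume
  have hE'0 : volume (f '' E') = 0 := by
    refine le_antisymm ?_ zero_le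
    refine ENNReal.le_of_forall_pos_le_add fun ε hε _ => ?_
    rw [zero_add]
    obtain ⟨δ, hδ, H⟩ := hAC ε (NNReal.coe_pos.2 hε)
    have := aux_AC_N_key hf (E' := E') inter_subset_right
      (measure_mono_null inter_subset_left hE0) (NNReal.coe_pos.2 hε) hδ H
    rwa [ENNReal.ofReal_coe_nnreal] at this
  refine le_antisymm ?_ zero_le
  calc volume (f '' E) ≤ volume (f '' E' ∪ {f a, f b}) := measure_mono hsplit
    _ ≤ volume (f '' E') + volume ({f a, f b} : Set ℝ) := measure_union_le _ _
    _ ≤ 0 := by rw [hE'0, hpair, add_zero]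


section Backward

variable {f : ℝ → ℝ} {a b : ℝ}

lemma aux_clamp_mem (hab : a ≤ b) (x : ℝ) : max a (min x b) ∈ Icc a b :=
  ⟨le_max_left _ _, max_le hab (min_le_right _ _)⟩

lemma aux_clamp_mono : Monotone (fun x : ℝ => max a (min x b)) :=
  fun _ _ hxy => max_le_max le_rfl (min_le_min hxy le_rfl)

lemma aux_clamp_eq (hx : x ∈ Icc a b) : max a (min x b) = x := by
  rw [min_eq_left hx.2, max_eq_right hx.1]

/-- the clamped variation function -/
noncomputable def varG (f : ℝ → ℝ) (a b : ℝ) : ℝ → ℝ :=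
  fun x => variationOnFromTo f (Icc a b) a (max a (min x b))

lemma aux_locBV (hBV : BoundedVariationOn f (Icc a b)) :
    LocallyBoundedVariationOn f (Icc a b) :=
  fun _ _ _ _ => ne_top_of_le_ne_top hBV (eVariationOn.mono f inter_subset_left)

lemma varG_mono (hab : a ≤ b) (hBV : BoundedVariationOn f (Icc a b)) :
    Monotone (varG f a b) := by
  intro x y hxy
  exact variationOnFromTo.monotoneOn (aux_locBV hBV) (left_mem_Icc.2 hab)
    (aux_clamp_mem hab x) (aux_clamp_mem hab y) (aux_clamp_mono hxy)

lemma varG_eq (hx : x ∈ Icc a b) :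
    varG f a b x = variationOnFromTo f (Icc a b) a x := by
  rw [varG, aux_clamp_eq hx]

lemma varG_bound (hab : a ≤ b) (hBV : BoundedVariationOn f (Icc a b))
    {x y : ℝ} (hx : x ∈ Icc a b) (hy : y ∈ Icc a b) (hxy : x ≤ y) :
    |f y - f x| ≤ varG f a b y - varG f a b x := by
  have hL := aux_locBV hBV
  have hadd := variationOnFromTo.add hL (left_mem_Icc.2 hab) hx hy
  rw [varG_eq hx, varG_eq hy, ← hadd, add_sub_cancel_left]
  calc |f y - f x| = dist (f x) (f y) := by rw [dist_comm, Real.dist_eq]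
    _ ≤ variationOnFromTo f (Icc a b) x y := by
        rw [variationOnFromTo.eq_of_le f _ hxy, dist_edist]
        apply ENNReal.toReal_mono (hL x y hx hy)
        exact eVariationOn.edist_le f ⟨hx, le_rfl, hxy⟩ ⟨hy, hxy, le_rfl⟩

lemma varG_lintegral_deriv_lt_top (hab : a ≤ b) (hBV : BoundedVariationOn f (Icc a b)) :
    ∫⁻ x, ENNReal.ofReal (deriv (varG f a b) x) ∂volume ≠ ⊤ := by
  have hg := varG_mono hab hBV
  set g := varG f a b with hgdef
  set μ := hg.stieltjesFunction.measure with hμdef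
  have h1 : ∀ᵐ x, ENNReal.ofReal (deriv g x) ≤ μ.rnDeriv volume x := by
    filter_upwards [hg.ae_hasDerivAt] with x hx
    rw [hx.deriv]
    exact ENNReal.ofReal_toReal_le
  have hbot : Tendsto hg.stieltjesFunction atBot (𝓝 0) := by
    apply Tendsto.congr' _ tendsto_const_nhds
    filter_upwards [eventually_lt_atBot a] with x hx
    have e1 : g x = 0 := by
      have : max a (min x b) = a := by
        rw [min_eq_left (hx.le.trans hab), max_eq_left hx.le]
      rw [hgdef, varG, this, variationOnFromTo.self]
    have e2 : g ((x + a)/2) = 0 := by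
      have h2 : (x+a)/2 ≤ a := by linarith
      have : max a (min ((x+a)/2) b) = a := by
        rw [min_eq_left (h2.trans hab), max_eq_left h2]
      rw [hgdef, varG, this, variationOnFromTo.self]
    have hle : hg.stieltjesFunction x ≤ g ((x + a)/2) := by
      rw [hg.stieltjesFunction_eq]
      exact hg.rightLim_le (by linarith)
    have hge : g x ≤ hg.stieltjesFunction x := by
      rw [hg.stieltjesFunction_eq]
      exact hg.le_rightLim le_rfl
    rw [e2] at hle
    rw [e1] at hge
    exact le_antisymm hle hge |>.symm
  have htopv : Tendsto hg.stieltjesFunction atTop (𝓝 (g b)) := by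
    apply Tendsto.congr' _ tendsto_const_nhds
    filter_upwards [eventually_gt_atTop b] with x hx
    have egc : ∀ z, b ≤ z → g z = g b := by
      intro z hz
      have : max a (min z b) = b := by rw [min_eq_right hz, max_eq_right hab]
      have hb' : max a (min b b) = b := by rw [min_self, max_eq_right hab]
      rw [hgdef, varG, varG, this, hb']
    have hle : hg.stieltjesFunction x ≤ g (x+1) := by
      rw [hg.stieltjesFunction_eq]
      exact hg.rightLim_le (by linarith)
    have hge : g x ≤ hg.stieltjesFunction x := by
      rw [hg.stieltjesFunction_eq]
      exact hg.le_rightLim le_rfl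
    rw [egc (x+1) (by linarith)] at hle
    rw [egc x hx.le] at hge
    exact le_antisymm hle hge |>.symm
  have hμuniv : μ univ = ENNReal.ofReal (g b - 0) :=
    hg.stieltjesFunction.measure_univ hbot htopv
  have hle : ∫⁻ x, ENNReal.ofReal (deriv g x) ∂volume ≤ ENNReal.ofReal (g b - 0) := by
    calc ∫⁻ x, ENNReal.ofReal (deriv g x) ∂volume
        ≤ ∫⁻ x, μ.rnDeriv volume x ∂volume := lintegral_mono_ae h1
      _ ≤ μ univ := Measure.lintegral_rnDeriv_le
      _ = ENNReal.ofReal (g b - 0) := hμuniv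
  exact ne_top_of_le_ne_top ENNReal.ofReal_ne_top hle

lemma varG_dominates (hab : a ≤ b) (hBV : BoundedVariationOn f (Icc a b)) :
    ∀ᵐ x, x ∈ Ioo a b → DifferentiableWithinAt ℝ f (Icc a b) x →
      |derivWithin f (Icc a b) x| ≤ deriv (varG f a b) x := by
  have hg := varG_mono hab hBV
  set g := varG f a b with hgdef
  filter_upwards [hg.ae_hasDerivAt] with x hgx hxmem hdf
  have hgx' : HasDerivAt g (deriv g x) x := by
    rwa [hgx.deriv]
  set c := derivWithin f (Icc a b) x with hc
  have hdf' : HasDerivWithinAt f c (Icc a b) x := hdf.hasDerivWithinAt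
  have hl1 : Tendsto (slope f x) (𝓝[Icc a b \ {x}] x) (𝓝 c) :=
    hasDerivWithinAt_iff_tendsto_slope.1 hdf'
  have hsub : 𝓝[>] x ≤ 𝓝[Icc a b \ {x}] x := by
    rw [← nhdsWithin_Ioo_eq_nhdsGT hxmem.2]
    exact nhdsWithin_mono x fun z hz =>
      ⟨⟨hxmem.1.le.trans hz.1.le, hz.2.le⟩, hz.1.ne'⟩
  have hl1' : Tendsto (fun z => |slope f x z|) (𝓝[>] x) (𝓝 |c|) :=
    (hl1.mono_left hsub).abs
  have hl2 : Tendsto (slope g x) (𝓝[>] x) (𝓝 (deriv g x)) :=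
    (hasDerivAt_iff_tendsto_slope.1 hgx').mono_left
      (nhdsWithin_mono x fun z hz => hz.ne')
  have hev : ∀ᶠ z in 𝓝[>] x, |slope f x z| ≤ slope g x z := by
    filter_upwards [Ioo_mem_nhdsGT hxmem.2] with z hz
    have hxz : x < z := hz.1
    have hzmem : z ∈ Icc a b := ⟨hxmem.1.le.trans hz.1.le, hz.2.le⟩
    have hxmem' : x ∈ Icc a b := ⟨hxmem.1.le, hxmem.2.le⟩
    have hnum : |f z - f x| ≤ g z - g x := varG_bound hab hBV hxmem' hzmem hxz.le
    rw [slope_def_field, slope_def_field, abs_div, abs_of_pos (sub_pos.2 hxz)]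
    exact (div_le_div_iff_of_pos_right (sub_pos.2 hxz)).2 hnum
  exact le_of_tendsto_of_tendsto hl1' hl2 hev

lemma aux_det_eq (L : ℝ →L[ℝ] ℝ) : L.det = L 1 := by
  have hL : L = (1 : ℝ →L[ℝ] ℝ).smulRight (L 1) := by
    apply ContinuousLinearMap.ext_ring
    rw [ContinuousLinearMap.smulRight_apply, ContinuousLinearMap.one_apply, one_smul]
  conv_lhs => rw [hL]
  rw [ContinuousLinearMap.det_smulRight, ContinuousLinearMap.one_apply, one_mul]

lemma aux_backward (hab : a < b) (hf : ContinuousOn f (Icc a b))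
    (hBV : BoundedVariationOn f (Icc a b))
    (hN : ∀ E ⊆ Icc a b, volume E = 0 → volume (f '' E) = 0) :
    ∀ ε > (0:ℝ), ∃ δ > (0:ℝ), ∀ n : ℕ, ∀ x y : Fin n → ℝ,
      (∀ i, a ≤ x i ∧ x i ≤ y i ∧ y i ≤ b) →
      (∀ i j, i ≠ j → Disjoint (Ioo (x i) (y i)) (Ioo (x j) (y j))) →
      ∑ i, (y i - x i) < δ → ∑ i, |f (y i) - f (x i)| < ε := by
  intro ε hε
  classical
  set s : Set ℝ := Icc a b with hsdef
  set g := varG f a b with hgdef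
  set G : ℝ → ℝ≥0∞ := fun x => ENNReal.ofReal (deriv g x) with hGdef
  have hGmeas : Measurable G := ENNReal.measurable_ofReal.comp (measurable_deriv g)
  -- the null set of non-differentiability
  set Zset : Set ℝ := s \ {x | DifferentiableWithinAt ℝ f s x} with hZdef
  have hZ0 : volume Zset = 0 := by
    have hae := (aux_locBV hBV).ae_differentiableWithinAt_of_mem
    rw [ae_iff] at hae
    refine measure_mono_null ?_ hae
    intro x hx
    simp only [mem_setOf_eq, not_forall]
    exact ⟨hx.1, hx.2⟩
  set Zm := toMeasurable volume Zset with hZmdef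
  have hZm0 : volume Zm = 0 := by rw [measure_toMeasurable]; exact hZ0
  set D : Set ℝ := s \ Zm with hDdef
  have hDmeas : MeasurableSet D := measurableSet_Icc.diff (measurableSet_toMeasurable _ _)
  have hDdiff : ∀ x ∈ D, DifferentiableWithinAt ℝ f s x := by
    intro x hx
    by_contra hcon
    exact hx.2 (subset_toMeasurable _ _ ⟨hx.1, hcon⟩)
  -- δ from absolute continuity of the integral of G
  obtain ⟨δ₀, hδ₀, hδ⟩ := exists_pos_setLIntegral_lt_of_measure_lt
    (μ := volume) (f := G) (varG_lintegral_deriv_lt_top hab.le hBV)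
    (ε := ENNReal.ofReal ε) (ENNReal.ofReal_pos.2 hε).ne'
  obtain ⟨r, hr0, hrδ⟩ : ∃ r : ℝ, 0 < r ∧ ENNReal.ofReal r < δ₀ := by
    rcases eq_or_ne δ₀ ⊤ with rfl | hne
    · exact ⟨1, one_pos, ENNReal.ofReal_lt_top⟩
    · refine ⟨(δ₀/2).toReal, ?_, ?_⟩
      · rw [ENNReal.toReal_pos_iff]
        constructor
        · exact ENNReal.div_pos hδ₀.ne' (by norm_num)
        · exact lt_of_le_of_lt ENNReal.half_le_self (lt_top_iff_ne_top.2 hne)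
      · rw [ENNReal.ofReal_toReal (by
          exact (lt_of_le_of_lt ENNReal.half_le_self (lt_top_iff_ne_top.2 hne)).ne)]
        exact ENNReal.half_lt_self hδ₀.ne' hne
  refine ⟨r, hr0, fun n x y hxy hdisj hsum => ?_⟩
  -- the pointwise a.e. comparison, restricted
  have hcmp := varG_dominates hab.le hBV
  -- per-interval estimate
  have hchain : ∀ i : Fin n,
      ENNReal.ofReal |f (y i) - f (x i)| ≤ ∫⁻ z in Ioo (x i) (y i), G z := by
    intro i
    have hxyi : x i ≤ y i := (hxy i).2.1
    have hsubi : Icc (x i) (y i) ⊆ s := Icc_subset_Icc (hxy i).1 (hxy i).2.2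
    set A : Set ℝ := Icc (x i) (y i) ∩ D with hAdef
    have hAmeas : MeasurableSet A := measurableSet_Icc.inter hDmeas
    have step1 : ENNReal.ofReal |f (y i) - f (x i)| ≤ volume (f '' Icc (x i) (y i)) := by
      have hiv : uIcc (f (x i)) (f (y i)) ⊆ f '' uIcc (x i) (y i) :=
        intermediate_value_uIcc (by rw [uIcc_of_le hxyi]; exact hf.mono hsubi)
      rw [uIcc_of_le hxyi] at hiv
      calc ENNReal.ofReal |f (y i) - f (x i)|
          = volume (uIcc (f (x i)) (f (y i))) := by
            rw [uIcc, Real.volume_Icc, max_sub_min_eq_abs, abs_sub_comm]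
        _ ≤ volume (f '' Icc (x i) (y i)) := measure_mono hiv
    have step3 : volume (f '' (Icc (x i) (y i) \ D)) = 0 := by
      apply hN _ (fun z hz => hsubi hz.1)
      refine measure_mono_null ?_ hZm0
      intro z hz
      by_contra hcon
      exact hz.2 ⟨hsubi hz.1, hcon⟩
    have step4 : volume (f '' A) ≤
        ∫⁻ z in A, ENNReal.ofReal |(fderivWithin ℝ f s z).det| ∂volume := by
      apply MeasureTheory.addHaar_image_le_lintegral_abs_det_fderiv volume hAmeas
      intro z hz
      exact ((hDdiff z hz.2).hasFDerivWithinAt).mono (inter_subset_left.trans hsubi)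
    have step5 : ∫⁻ z in A, ENNReal.ofReal |(fderivWithin ℝ f s z).det| ∂volume
        ≤ ∫⁻ z in A, G z ∂volume := by
      apply lintegral_mono_ae
      have hmem := ae_restrict_mem hAmeas (μ := volume)
      have hne : ∀ᵐ z ∂volume.restrict A, z ≠ a ∧ z ≠ b := by
        apply ae_restrict_of_ae
        have : volume ({a, b} : Set ℝ) = 0 := (Set.toFinite _).measure_zero volume
        filter_upwards [measure_eq_zero_iff_ae_notMem.1 this] with z hz
        simpa [not_or] using hz
      filter_upwards [ae_restrict_of_ae hcmp, hmem, hne] with z h1 h2 h3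
      have hzs : z ∈ s := hsubi h2.1
      have hzIoo : z ∈ Ioo a b := ⟨lt_of_le_of_ne hzs.1 (Ne.symm h3.1), lt_of_le_of_ne hzs.2 h3.2⟩
      have hdz := hDdiff z h2.2
      have := h1 hzIoo hdz
      rw [aux_det_eq]
      exact le_trans (by rw [← derivWithin]; exact ENNReal.ofReal_le_ofReal this) le_rfl
    have step6 : ∫⁻ z in A, G z ∂volume ≤ ∫⁻ z in Ioo (x i) (y i), G z ∂volume := by
      rw [show ∫⁻ z in Ioo (x i) (y i), G z ∂volume = ∫⁻ z in Icc (x i) (y i), G z ∂volume from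
        setLIntegral_congr Ioo_ae_eq_Icc]
      exact lintegral_mono_set inter_subset_left
    calc ENNReal.ofReal |f (y i) - f (x i)|
        ≤ volume (f '' Icc (x i) (y i)) := step1
      _ ≤ volume (f '' A ∪ f '' (Icc (x i) (y i) \ D)) := by
          apply measure_mono
          rw [← image_union, hAdef, inter_union_diff]
      _ ≤ volume (f '' A) + volume (f '' (Icc (x i) (y i) \ D)) := measure_union_le _ _
      _ = volume (f '' A) := by rw [step3, add_zero]
      _ ≤ ∫⁻ z in Ioo (x i) (y i), G z ∂volume := (step4.trans step5).trans step6
  -- sum up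
  have hvol : volume (⋃ i, Ioo (x i) (y i)) < δ₀ := by
    calc volume (⋃ i, Ioo (x i) (y i))
        ≤ ∑ i, volume (Ioo (x i) (y i)) := by
          rw [← tsum_fintype (L := SummationFilter.unconditional _)]
          exact measure_iUnion_le _
      _ = ∑ i, ENNReal.ofReal (y i - x i) := by
          refine Finset.sum_congr rfl fun i _ => Real.volume_Ioo
      _ = ENNReal.ofReal (∑ i, (y i - x i)) :=
          (ENNReal.ofReal_sum_of_nonneg fun i _ => sub_nonneg.2 (hxy i).2.1).symm
      _ ≤ ENNReal.ofReal r := ENNReal.ofReal_le_ofReal hsum.le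
      _ < δ₀ := hrδ
  have hfinal : ENNReal.ofReal (∑ i, |f (y i) - f (x i)|) < ENNReal.ofReal ε := by
    calc ENNReal.ofReal (∑ i, |f (y i) - f (x i)|)
        = ∑ i, ENNReal.ofReal |f (y i) - f (x i)| :=
          ENNReal.ofReal_sum_of_nonneg fun i _ => abs_nonneg _
      _ ≤ ∑ i, ∫⁻ z in Ioo (x i) (y i), G z ∂volume := Finset.sum_le_sum fun i _ => hchain i
      _ = ∫⁻ z in ⋃ i, Ioo (x i) (y i), G z ∂volume := by
          rw [lintegral_iUnion (fun i => measurableSet_Ioo)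
            (fun i j hij => hdisj i j hij) G, tsum_fintype]
      _ < ENNReal.ofReal ε := hδ _ hvol
  have hsumnn : 0 ≤ ∑ i, |f (y i) - f (x i)| := Finset.sum_nonneg fun i _ => abs_nonneg _
  rwa [ENNReal.ofReal_lt_ofReal_iff hε] at hfinal

end Backward

/-- Banach–Zarecki Theorem: `f` is absolutely continuous on `[a,b]` if and only if it is
continuous on `[a,b]`, of bounded variation on `[a,b]`, and maps subsets of `[a,b]` of
Lebesgue measure zero to sets of measure zero. -/
theorem banach_zarecki (a b : ℝ) (hab : a ≤ b) (f : ℝ → ℝ) :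
    AbsolutelyContinuousOn f a b ↔
      ContinuousOn f (Icc a b) ∧ BoundedVariationOn f (Icc a b) ∧
        ∀ E ⊆ Icc a b, volume E = 0 → volume (f '' E) = 0 := by
  constructor
  · intro hAC
    have hAC' : ∀ ε > (0:ℝ), ∃ δ > (0:ℝ), ∀ n : ℕ, ∀ x y : Fin n → ℝ,
        (∀ i, a ≤ x i ∧ x i ≤ y i ∧ y i ≤ b) →
        (∀ i j, i ≠ j → Disjoint (Ioo (x i) (y i)) (Ioo (x j) (y j))) →
        ∑ i, (y i - x i) < δ → ∑ i, |f (y i) - f (x i)| < ε := hAC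
    exact ⟨aux_AC_cont hAC', aux_AC_BV hab hAC', aux_AC_N (aux_AC_cont hAC') hAC'⟩
  · rintro ⟨hf, hBV, hN⟩
    rcases eq_or_lt_of_le hab with rfl | hlt
    · intro ε hε
      refine ⟨1, one_pos, fun n x y hxy _ _ => ?_⟩
      have : ∀ i, |f (y i) - f (x i)| = 0 := by
        intro i
        have hxyi : x i = y i :=
          le_antisymm (hxy i).2.1 ((hxy i).2.2.trans (hxy i).1)
        rw [hxyi, sub_self, abs_zero]
      rw [Finset.sum_congr rfl fun i _ => this i, Finset.sum_const, smul_zero]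
      exact hε
    · exact aux_backward hlt hf hBV hN
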